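/- arXiv:1802.02012 — 2 statements merged into one kernel-verified Lean document; each statement's English description precedes it below -/
import Mathlib

section
/- Let A be a Banach algebra and I a closed two-sided ideal of A. If A is strong pseudo-amenable, then the quotient Banach algebra A/I is strong pseudo-amenable. -/
noncomputable section

open ContinuousLinearMap NormedSpace

/-- A directed index system for nets. -/
structure DirSys : Type 1 where
  ι : Type
  le : ι → ι → Prop
  refl : ∀ i, le i i
  trans : ∀ {i j k}, le i j → le j k → le i k
  nonempty : Nonempty ι
  directed : ∀ i j, ∃ k, le i k ∧ le j k

/-- Convergence of a net indexed by a directed system, in a (pseudo)metric space. -/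
def DirSys.Tendsto (D : DirSys) {X : Type*} [PseudoMetricSpace X] (m : D.ι → X) (x : X) : Prop :=
  ∀ ε : ℝ, 0 < ε → ∃ i, ∀ j, D.le i j → dist (m j) x < ε

variable (A : Type*) [NonUnitalNormedRing A] [NormedSpace ℂ A]
  [IsScalarTower ℂ A A] [SMulCommClass ℂ A A]

/-- The continuous bilinear forms on `A`, i.e. the dual space of the projective tensor
product `A ⊗̂ A`. -/
abbrev BilForms := A →L[ℂ] StrongDual ℂ A

instance : NormedAddCommGroup (BilForms A) := ContinuousLinearMap.toNormedAddCommGroup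

instance : NormedSpace ℂ (BilForms A) := ContinuousLinearMap.toNormedSpace

/-- The bidual `(A ⊗̂ A)**` of the projective tensor product, realized concretely as the
dual space of the space of continuous bilinear forms on `A` (the latter being canonically,
isometrically, the dual of `A ⊗̂ A`). -/
abbrev TensorBidual := StrongDual ℂ (BilForms A)

/-- The bidual `A**` of `A`. -/
abbrev Bidual := StrongDual ℂ (StrongDual ℂ A)

variable {A}

/-- The elementary tensor `x ⊗ y`, viewed inside `(A ⊗̂ A)**` via the canonical isometric
embedding of `A ⊗̂ A` into its bidual. -/
def elemT (x y : A) : TensorBidual A :=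
  (ContinuousLinearMap.apply ℂ ℂ y).comp (ContinuousLinearMap.apply ℂ (StrongDual ℂ A) x)

variable (A)

/-- The canonical isometric copy of `A ⊗̂ A` inside its bidual: the closure of the linear
span of the elementary tensors. -/
def ptp : Submodule ℂ (TensorBidual A) :=
  (Submodule.span ℂ {m : TensorBidual A | ∃ x y : A, m = elemT x y}).topologicalClosure

/-- The map `f ↦ f·a` on bilinear forms, `(f·a)(x,y) = f(ax, y)`; predual of the left
module action of `A` on `(A ⊗̂ A)**`. -/
def leftBil (a : A) : BilForms A →L[ℂ] BilForms A :=
  (compL ℂ A A (StrongDual ℂ A)).flip (ContinuousLinearMap.mul ℂ A a)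

/-- The map `f ↦ a·f` on bilinear forms, `(a·f)(x,y) = f(x, ya)`; predual of the right
module action of `A` on `(A ⊗̂ A)**`. -/
def rightBil (a : A) : BilForms A →L[ℂ] BilForms A :=
  compL ℂ A (StrongDual ℂ A) (StrongDual ℂ A)
    ((compL ℂ A A ℂ).flip ((ContinuousLinearMap.mul ℂ A).flip a))

variable {A}

/-- The left module action `a · m` of `A` on `(A ⊗̂ A)**`, extending
`a · (x ⊗ y) = (a x) ⊗ y`. -/
def tsmulL (a : A) (m : TensorBidual A) : TensorBidual A := m.comp (leftBil A a)

/-- The right module action `m · a` of `A` on `(A ⊗̂ A)**`, extending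
`(x ⊗ y) · a = x ⊗ (y a)`. -/
def tsmulR (a : A) (m : TensorBidual A) : TensorBidual A := m.comp (rightBil A a)

variable (A)

/-- The adjoint `π_A* : A* → (A ⊗̂ A)*` of the product morphism `π_A`, namely
`(π_A* f)(x, y) = f (x y)`. -/
def piStar : StrongDual ℂ A →L[ℂ] BilForms A :=
  ((compL ℂ A (A →L[ℂ] A) (StrongDual ℂ A)).flip (ContinuousLinearMap.mul ℂ A)).comp
    (compL ℂ A A ℂ)

variable {A}

/-- The second adjoint `π_A** : (A ⊗̂ A)** → A**` of the product morphism. -/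
def piSS (m : TensorBidual A) : Bidual A := m.comp (piStar A)

variable (A)

/-- The map `f ↦ f·a` on `A*`, `(f·a)(x) = f(ax)`. -/
def dualROp (a : A) : StrongDual ℂ A →L[ℂ] StrongDual ℂ A :=
  (compL ℂ A A ℂ).flip (ContinuousLinearMap.mul ℂ A a)

/-- The map `f ↦ a·f` on `A*`, `(a·f)(x) = f(xa)`. -/
def dualLOp (a : A) : StrongDual ℂ A →L[ℂ] StrongDual ℂ A :=
  (compL ℂ A A ℂ).flip ((ContinuousLinearMap.mul ℂ A).flip a)

variable {A}

/-- The product `a · Φ` of `a ∈ A` and `Φ ∈ A**`: `(a·Φ)(f) = Φ(f·a)`. -/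
def bsmulL (a : A) (Φ : Bidual A) : Bidual A := Φ.comp (dualROp A a)

/-- The product `Φ · a` of `Φ ∈ A**` and `a ∈ A`: `(Φ·a)(f) = Φ(a·f)`. -/
def bsmulR (a : A) (Φ : Bidual A) : Bidual A := Φ.comp (dualLOp A a)

/-- The canonical isometric embedding of `A` into its bidual. -/
def inclB (a : A) : Bidual A := NormedSpace.inclusionInDoubleDual ℂ A a

variable (A)

/-- A Banach algebra `A` is *strong pseudo-amenable* if there is a (not necessarily bounded)
net `(m_α)` in `(A ⊗̂ A)**` such that `a·m_α − m_α·a → 0` and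
`a·π_A**(m_α) = π_A**(m_α)·a → a` for every `a ∈ A`. -/
def StrongPseudoAmenable : Prop :=
  ∃ (D : DirSys) (m : D.ι → TensorBidual A),
    (∀ a : A, D.Tendsto (fun α => tsmulL a (m α) - tsmulR a (m α)) 0) ∧
    (∀ (a : A) (α : D.ι), bsmulL a (piSS (m α)) = bsmulR a (piSS (m α))) ∧
    (∀ a : A, D.Tendsto (fun α => bsmulR a (piSS (m α))) (inclB a))

/-- A Banach algebra `A` is *pseudo-amenable* if there is a (not necessarily bounded)
net `(m_α)` in `A ⊗̂ A` such that `a·m_α − m_α·a → 0` and `π_A(m_α)a → a` for every `a ∈ A`. -/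
def PseudoAmenable : Prop :=
  ∃ (D : DirSys) (m : D.ι → TensorBidual A),
    (∀ α, m α ∈ ptp A) ∧
    (∀ a : A, D.Tendsto (fun α => tsmulL a (m α) - tsmulR a (m α)) 0) ∧
    (∀ a : A, D.Tendsto (fun α => bsmulR a (piSS (m α))) (inclB a))

/-- A Banach algebra `A` is *pseudo-contractible* if there is a net `(m_α)` in `A ⊗̂ A`
such that `a·m_α = m_α·a` and `π_A(m_α)a → a` for every `a ∈ A`. -/
def PseudoContractible : Prop :=
  ∃ (D : DirSys) (m : D.ι → TensorBidual A),
    (∀ α, m α ∈ ptp A) ∧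
    (∀ (a : A) (α : D.ι), tsmulL a (m α) = tsmulR a (m α)) ∧
    (∀ a : A, D.Tendsto (fun α => bsmulR a (piSS (m α))) (inclB a))

/-- A Banach algebra `A` is *amenable* if it has a bounded approximate diagonal: a bounded
net `(m_α)` in `A ⊗̂ A` such that `a·m_α − m_α·a → 0` and `π_A(m_α)a → a` for every `a ∈ A`. -/
def AmenableBanachAlgebra : Prop :=
  ∃ (D : DirSys) (m : D.ι → TensorBidual A) (C : ℝ),
    (∀ α, m α ∈ ptp A) ∧
    (∀ α, ‖m α‖ ≤ C) ∧
    (∀ a : A, D.Tendsto (fun α => tsmulL a (m α) - tsmulR a (m α)) 0) ∧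
    (∀ a : A, D.Tendsto (fun α => bsmulR a (piSS (m α))) (inclB a))

end

/-- Pushing a convergent net through a continuous linear map. -/
lemma DirSys.Tendsto.clm_comp {D : DirSys} {X Y : Type*}
    [SeminormedAddCommGroup X] [SeminormedAddCommGroup Y]
    [NormedSpace ℂ X] [NormedSpace ℂ Y]
    (T : X →L[ℂ] Y) {m : D.ι → X} {x : X} (h : D.Tendsto m x) :
    D.Tendsto (fun α => T (m α)) (T x) := by
  intro ε hε
  have hC : (0:ℝ) < ‖T‖ + 1 := by positivity
  obtain ⟨i, hi⟩ := h (ε / (‖T‖ + 1)) (by positivity)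
  refine ⟨i, fun j hj => ?_⟩
  have h1 : dist (T (m j)) (T x) ≤ ‖T‖ * dist (m j) x := by
    rw [dist_eq_norm, dist_eq_norm, ← map_sub]
    exact T.le_opNorm _
  have h2 := hi j hj
  calc dist (T (m j)) (T x) ≤ ‖T‖ * dist (m j) x := h1
    _ ≤ (‖T‖ + 1) * dist (m j) x := by nlinarith [dist_nonneg (x := m j) (y := x)]
    _ < (‖T‖ + 1) * (ε / (‖T‖ + 1)) := by
        exact mul_lt_mul_of_pos_left h2 hC
    _ = ε := by field_simp

set_option maxHeartbeats 1000000 in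
set_option synthInstance.maxHeartbeats 1000000 in
/-- Let `A` be a Banach algebra and `I` a closed two-sided ideal of `A`.
If `A` is strong pseudo-amenable, then the quotient Banach algebra `A/I` is strong
pseudo-amenable.  (The quotient is formalized as any Banach algebra `Q` together with a
continuous surjective algebra homomorphism `q : A → Q` whose kernel is exactly `I`; by the
open mapping theorem any such `Q` is canonically topologically isomorphic to `A/I`.) -/
theorem strongPseudoAmenable_quotient
    (A : Type) [NonUnitalNormedRing A] [NormedSpace ℂ A] [IsScalarTower ℂ A A]
    [SMulCommClass ℂ A A] [CompleteSpace A]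
    (I : TwoSidedIdeal A) (hI : IsClosed (I : Set A))
    (hA : StrongPseudoAmenable A)
    (Q : Type) [NonUnitalNormedRing Q] [NormedSpace ℂ Q] [IsScalarTower ℂ Q Q]
    [SMulCommClass ℂ Q Q] [CompleteSpace Q]
    (q : A → Q) (hlin : IsLinearMap ℂ q) (hcont : Continuous q)
    (hmul : ∀ x y : A, q (x * y) = q x * q y) (hsurj : Function.Surjective q)
    (hker : ∀ x : A, q x = 0 ↔ x ∈ I) :
    StrongPseudoAmenable Q := by
  classical
  obtain ⟨D, m, h1, h2, h3⟩ := hA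
  -- `q` as a continuous linear map
  let qL : A →L[ℂ] Q := ⟨hlin.mk' q, hcont⟩
  have hqL : ∀ x : A, qL x = q x := fun x => rfl
  -- the dual map `q* : Q* → A*`
  let qStar : StrongDual ℂ Q →L[ℂ] StrongDual ℂ A :=
    (ContinuousLinearMap.compL ℂ A Q ℂ).flip qL
  have hqStar : ∀ (f : StrongDual ℂ Q) (x : A), qStar f x = f (q x) := fun f x => rfl
  -- pullback of bilinear forms
  let BilPull : BilForms Q →L[ℂ] BilForms A :=
    ((ContinuousLinearMap.compL ℂ A (StrongDual ℂ Q) (StrongDual ℂ A)) qStar).comp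
      ((ContinuousLinearMap.compL ℂ A Q (StrongDual ℂ Q)).flip qL)
  have hBilPull : ∀ (F : BilForms Q) (x y : A), BilPull F x y = F (q x) (q y) :=
    fun F x y => rfl
  -- push-forward on biduals
  let Θ : TensorBidual A →L[ℂ] TensorBidual Q :=
    (ContinuousLinearMap.compL ℂ (BilForms Q) (BilForms A) ℂ).flip BilPull
  have hΘ : ∀ (n : TensorBidual A) (F : BilForms Q), Θ n F = n (BilPull F) := fun n F => rfl
  let qSS : Bidual A →L[ℂ] Bidual Q :=
    (ContinuousLinearMap.compL ℂ (StrongDual ℂ Q) (StrongDual ℂ A) ℂ).flip qStar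
  have hqSS : ∀ (Φ : Bidual A) (f : StrongDual ℂ Q), qSS Φ f = Φ (qStar f) :=
    fun Φ f => rfl
  -- intertwining identities
  have keyL : ∀ (a : A) (n : TensorBidual A), tsmulL (q a) (Θ n) = Θ (tsmulL a n) := by
    intro a n
    ext F
    show n (BilPull (leftBil Q (q a) F)) = n (leftBil A a (BilPull F))
    congr 1
    ext x y
    show F (q a * q x) (q y) = F (q (a * x)) (q y)
    rw [hmul]
  have keyR : ∀ (a : A) (n : TensorBidual A), tsmulR (q a) (Θ n) = Θ (tsmulR a n) := by
    intro a n
    ext F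
    show n (BilPull (rightBil Q (q a) F)) = n (rightBil A a (BilPull F))
    congr 1
    ext x y
    show F (q x) (q y * q a) = F (q x) (q (y * a))
    rw [hmul]
  have keyPi : ∀ n : TensorBidual A, piSS (Θ n) = qSS (piSS n) := by
    intro n
    ext f
    show n (BilPull (piStar Q f)) = n (piStar A (qStar f))
    congr 1
    ext x y
    show f (q x * q y) = f (q (x * y))
    rw [hmul]
  have keybL : ∀ (a : A) (Φ : Bidual A), bsmulL (q a) (qSS Φ) = qSS (bsmulL a Φ) := by
    intro a Φ
    ext f
    show Φ (qStar (dualROp Q (q a) f)) = Φ (dualROp A a (qStar f))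
    congr 1
    ext x
    show f (q a * q x) = f (q (a * x))
    rw [hmul]
  have keybR : ∀ (a : A) (Φ : Bidual A), bsmulR (q a) (qSS Φ) = qSS (bsmulR a Φ) := by
    intro a Φ
    ext f
    show Φ (qStar (dualLOp Q (q a) f)) = Φ (dualLOp A a (qStar f))
    congr 1
    ext x
    show f (q x * q a) = f (q (x * a))
    rw [hmul]
  have keyIncl : ∀ a : A, inclB (q a) = qSS (inclB a) := by
    intro a
    ext f
    rfl
  refine ⟨D, fun α => Θ (m α), ?_, ?_, ?_⟩
  · intro b
    obtain ⟨a, rfl⟩ := hsurj b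
    have := (h1 a).clm_comp Θ
    rw [map_zero] at this
    convert this using 2 with α
    · exact rfl
    · rw [keyL, keyR, map_sub]
  · intro b α
    obtain ⟨a, rfl⟩ := hsurj b
    rw [keyPi, keybL, keybR, h2 a α]
  · intro b
    obtain ⟨a, rfl⟩ := hsurj b
    have := DirSys.Tendsto.clm_comp (X := Bidual A) (Y := Bidual Q) (by exact qSS) (by exact h3 a)
    rw [← keyIncl] at this
    convert this using 2 with α
    · exact rfl
    · rw [keyPi, keybR]
end

section
/- Let I be a non-empty set. Then the matrix algebra M_I(ℂ) is strong pseudo-amenable if and only if I is finite. -/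
/-- `(M, e)` is a realization of the Banach algebra `M_I(ℂ)` of `I × I` complex matrices
with finite `ℓ¹`-norm: the `e i j` are the standard matrix units `ε_{i,j}`, finite linear
combinations of them carry the `ℓ¹`-norm, and they have dense linear span. -/
def IsMatrixUnitsL1 (I : Type) [DecidableEq I] (M : Type)
    [NonUnitalNormedRing M] [NormedSpace ℂ M] (e : I → I → M) : Prop :=
  (∀ i j k l : I, e i j * e k l = if j = k then e i l else 0) ∧
  (∀ (s : Finset (I × I)) (c : I × I → ℂ),
      ‖∑ p ∈ s, c p • e p.1 p.2‖ = ∑ p ∈ s, ‖c p‖) ∧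
  ((Submodule.span ℂ (Set.range fun p : I × I => e p.1 p.2)).topologicalClosure = ⊤)


set_option linter.unusedSectionVars false
section Aux

variable {I : Type} [Nonempty I] [DecidableEq I]
  {M : Type} [NonUnitalNormedRing M] [NormedSpace ℂ M] [IsScalarTower ℂ M M]
  [SMulCommClass ℂ M M] [CompleteSpace M]
  {e : I → I → M}

lemma dense_span_units (hM : IsMatrixUnitsL1 I M e) :
    Dense (↑(Submodule.span ℂ (Set.range fun p : I × I => e p.1 p.2)) : Set M) :=
  Submodule.dense_iff_topologicalClosure_eq_top.mpr hM.2.2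

lemma ext_units {X : Type*} [NormedAddCommGroup X] [NormedSpace ℂ X]
    (hM : IsMatrixUnitsL1 I M e) {S T : M →L[ℂ] X}
    (h : ∀ i j, S (e i j) = T (e i j)) : S = T := by
  have h1 : Set.EqOn S T (Set.range fun p : I × I => e p.1 p.2) := by
    rintro _ ⟨p, rfl⟩; exact h p.1 p.2
  have h2 : Set.EqOn (S : M → X) (T : M → X)
      (Submodule.span ℂ (Set.range fun p : I × I => e p.1 p.2) : Set M) :=
    fun x hx => LinearMap.eqOn_span h1 hx
  have h3 := Continuous.ext_on (dense_span_units hM) S.continuous T.continuous h2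
  exact ContinuousLinearMap.ext fun x => congrFun h3 x

lemma exists_dual_units (hM : IsMatrixUnitsL1 I M e) (w : I × I → ℂ)
    (hw : ∀ p, ‖w p‖ ≤ 1) :
    ∃ f : StrongDual ℂ M, (∀ i j, f (e i j) = w (i, j)) ∧ ∀ x : M, ‖f x‖ ≤ ‖x‖ := by
  classical
  set v : I × I → M := fun p => e p.1 p.2 with hv
  have li : LinearIndependent ℂ v := by
    rw [linearIndependent_iff']
    intro s g hg i hi
    have h0 : ∑ p ∈ s, ‖g p‖ = 0 := by
      rw [← hM.2.1 s g]
      simpa [v] using congrArg norm hg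
    have := (Finset.sum_eq_zero_iff_of_nonneg
      (fun p _ => norm_nonneg _)).mp h0 i hi
    exact norm_eq_zero.mp this
  set Sp := Submodule.span ℂ (Set.range v) with hSp
  let B : Module.Basis (I × I) ℂ Sp := Module.Basis.span li
  let ψ₀ : Sp →ₗ[ℂ] ℂ := Module.Basis.constr B ℂ w
  have key : ∀ x : Sp, ‖ψ₀ x‖ ≤ ‖x‖ := by
    intro x
    obtain ⟨c, hc⟩ := (Finsupp.mem_span_range_iff_exists_finsupp).mp x.2
    have hval : (x : M) = ∑ p ∈ c.support, c p • v p := by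
      rw [← hc, Finsupp.sum]
    have hx : x = ∑ p ∈ c.support, c p • B p := by
      apply Subtype.ext
      rw [hval, AddSubmonoidClass.coe_finset_sum]
      refine Finset.sum_congr rfl fun p _ => ?_
      rw [SetLike.val_smul, Module.Basis.span_apply]
    have hψ : ψ₀ x = ∑ p ∈ c.support, c p * w p := by
      rw [hx, map_sum]
      refine Finset.sum_congr rfl fun p _ => ?_
      rw [map_smul, Module.Basis.constr_basis, smul_eq_mul]
    have hn : ‖x‖ = ∑ p ∈ c.support, ‖c p‖ := by
      rw [show ‖x‖ = ‖(x : M)‖ from rfl, hval, hM.2.1]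
    rw [hψ, hn]
    calc ‖∑ p ∈ c.support, c p * w p‖ ≤ ∑ p ∈ c.support, ‖c p * w p‖ := norm_sum_le _ _
      _ ≤ ∑ p ∈ c.support, ‖c p‖ := by
          refine Finset.sum_le_sum fun p _ => ?_
          rw [norm_mul]
          calc ‖c p‖ * ‖w p‖ ≤ ‖c p‖ * 1 :=
                mul_le_mul_of_nonneg_left (by simpa using hw p)
                  (norm_nonneg _)
            _ = ‖c p‖ := by rw [mul_one]
  let ψ : Sp →L[ℂ] ℂ := LinearMap.mkContinuous ψ₀ 1 (fun x => by simpa using key x)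
  have hd : DenseRange (Sp.subtypeL : Sp →L[ℂ] M) := by
    have := dense_span_units hM
    rwa [DenseRange, show Set.range (Sp.subtypeL : Sp →L[ℂ] M) = (Sp : Set M) from
      Subtype.range_coe]
  have hui : IsUniformInducing (Sp.subtypeL : Sp →L[ℂ] M) :=
    isUniformEmbedding_subtype_val.isUniformInducing
  have hψx : ∀ x : Sp, ψ.extend Sp.subtypeL (x : M) = ψ x := fun x =>
    ContinuousLinearMap.extend_eq ψ hd hui x
  refine ⟨ψ.extend Sp.subtypeL, ?_, ?_⟩
  · intro i j
    have h1 : ((B (i, j) : Sp) : M) = e i j := congrArg Subtype.val (Module.Basis.span_apply li (i, j))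
    have h2 := hψx (B (i, j))
    rw [h1] at h2
    rw [h2]
    show ψ₀ (B (i, j)) = w (i, j)
    exact Module.Basis.constr_basis B ℂ w (i, j)
  · intro x
    have hc : IsClosed {y : M | ‖ψ.extend Sp.subtypeL y‖ ≤ ‖y‖} :=
      isClosed_le ((ψ.extend Sp.subtypeL).continuous.norm) continuous_norm
    have hsub : (Sp : Set M) ⊆ {y : M | ‖ψ.extend Sp.subtypeL y‖ ≤ ‖y‖} := by
      rintro y hy
      have := hψx ⟨y, hy⟩
      simp only [Set.mem_setOf_eq, this]
      exact key ⟨y, hy⟩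
    have : closure (Sp : Set M) ⊆ {y : M | ‖ψ.extend Sp.subtypeL y‖ ≤ ‖y‖} :=
      closure_minimal hsub hc
    rw [(dense_span_units hM).closure_eq] at this
    exact this (Set.mem_univ x)

end Aux
section Fwd

variable {I : Type} [Nonempty I] [DecidableEq I]
  {M : Type} [NonUnitalNormedRing M] [NormedSpace ℂ M] [IsScalarTower ℂ M M]
  [SMulCommClass ℂ M M] [CompleteSpace M]
  {e : I → I → M}

lemma abs_ite_le (c : Prop) [Decidable c] : ‖if c then (1 : ℂ) else 0‖ ≤ 1 := by
  split <;> simp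

lemma spa_finite (hM : IsMatrixUnitsL1 I M e) (h : StrongPseudoAmenable M) : Finite I := by
  classical
  by_contra hfin
  have hI : Infinite I := not_finite_iff_infinite.mp hfin
  obtain ⟨D, m, _hnet, hcen, happ⟩ := h
  have hex := fun q : I × I => exists_dual_units hM (fun p => if p = q then 1 else 0)
    (fun p => abs_ite_le _)
  choose φ hφ hφn using hex
  obtain ⟨o⟩ := ‹Nonempty I›
  obtain ⟨α₀, hα₀⟩ := happ (e o o) (1/2) (by norm_num)
  have hd2 : dist (bsmulR (e o o) (piSS (m α₀))) (inclB (e o o)) < 1/2 := hα₀ α₀ (D.refl α₀)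
  set Φ : Bidual M := piSS (m α₀) with hΦdef
  set lam : ℂ := Φ (φ (o, o)) with hlamdef
  have hLo : dualLOp M (e o o) (φ (o, o)) = φ (o, o) := by
    apply ext_units hM
    intro i j
    show φ (o, o) (e i j * e o o) = φ (o, o) (e i j)
    rw [hM.1]
    by_cases hj : j = o
    · subst hj; simp [hφ]
    · simp [hφ, hj, Prod.ext_iff]
  have hbsr : bsmulR (e o o) Φ (φ (o, o)) = lam := by
    show Φ (dualLOp M (e o o) (φ (o, o))) = lam
    rw [hLo]
  have hinc : inclB (e o o) (φ (o, o)) = 1 := by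
    show φ (o, o) (e o o) = 1
    simp [hφ]
  have hval : (bsmulR (e o o) Φ - inclB (e o o)) (φ (o, o)) = lam - 1 := by
    rw [ContinuousLinearMap.sub_apply, hbsr, hinc]
  have hnφ : ‖φ (o, o)‖ ≤ 1 := ContinuousLinearMap.opNorm_le_bound _ zero_le_one
    (fun x => by simpa using hφn (o, o) x)
  have hlam1 : ‖lam - 1‖ ≤ 1 / 2 := by
    rw [← hval]
    calc ‖(bsmulR (e o o) Φ - inclB (e o o)) (φ (o, o))‖
        ≤ ‖bsmulR (e o o) Φ - inclB (e o o)‖ * ‖φ (o, o)‖ :=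
          ContinuousLinearMap.le_opNorm _ _
      _ ≤ (1 / 2) * 1 :=
          mul_le_mul (le_of_lt ((dist_eq_norm (bsmulR (e o o) Φ) (inclB (e o o))).symm.trans_lt hd2)) hnφ (norm_nonneg _) (by norm_num)
      _ = 1 / 2 := by norm_num
  have hdiag : ∀ j : I, Φ (φ (j, j)) = lam := by
    intro j
    have hc := hcen (e o j) α₀
    have hR : dualROp M (e o j) (φ (o, j)) = φ (j, j) := by
      apply ext_units hM; intro k l
      show φ (o, j) (e o j * e k l) = φ (j, j) (e k l)
      rw [hM.1]
      by_cases hk : j = k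
      · subst hk; simp [hφ, Prod.ext_iff, eq_comm]
      · simp [hφ, Prod.ext_iff, hk, Ne.symm hk]
    have hL2 : dualLOp M (e o j) (φ (o, j)) = φ (o, o) := by
      apply ext_units hM; intro k l
      show φ (o, j) (e k l * e o j) = φ (o, o) (e k l)
      rw [hM.1]
      by_cases hl : l = o
      · subst hl; simp [hφ, Prod.ext_iff]
      · simp [hφ, Prod.ext_iff, hl]
    have h3 := ContinuousLinearMap.ext_iff.mp hc (φ (o, j))
    have h3' : Φ (dualROp M (e o j) (φ (o, j))) = Φ (dualLOp M (e o j) (φ (o, j))) := h3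
    rw [hR, hL2] at h3'
    exact h3'
  obtain ⟨n, hn⟩ := exists_nat_gt (2 * ‖Φ‖)
  obtain ⟨s, hs⟩ := Infinite.exists_subset_card_eq I n
  obtain ⟨g, hg, hgn⟩ := exists_dual_units hM
    (fun p => if p.1 = p.2 ∧ p.1 ∈ s then 1 else 0)
    (fun p => abs_ite_le _)
  have hgsum : g = ∑ j ∈ s, φ (j, j) := by
    apply ext_units hM; intro k l
    rw [ContinuousLinearMap.sum_apply, hg]
    have : ∀ j ∈ s, φ (j, j) (e k l) = if j = k ∧ k = l then 1 else 0 := by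
      intro j _
      rw [hφ]
      by_cases hjk : j = k
      · subst hjk; simp [Prod.ext_iff, eq_comm]
      · simp [Prod.ext_iff, hjk, Ne.symm hjk]
    rw [Finset.sum_congr rfl this]
    by_cases hkl : k = l
    · subst hkl
      simp [Finset.sum_ite_eq' s k (fun _ => (1 : ℂ))]
    · simp [hkl]
  have hΦg : Φ g = (n : ℂ) * lam := by
    rw [hgsum, map_sum]
    rw [Finset.sum_congr rfl fun j _ => hdiag j, Finset.sum_const, hs]
    simp [nsmul_eq_mul]
  have hgnorm : ‖g‖ ≤ 1 := ContinuousLinearMap.opNorm_le_bound _ zero_le_one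
    (fun x => by simpa using hgn x)
  have hb : (n : ℝ) * ‖lam‖ ≤ ‖Φ‖ := by
    have h5 : ‖Φ g‖ ≤ ‖Φ‖ * ‖g‖ := ContinuousLinearMap.le_opNorm _ _
    have h6 : ‖Φ g‖ = (n : ℝ) * ‖lam‖ := by
      rw [hΦg, norm_mul, Complex.norm_natCast]
    rw [h6] at h5
    calc (n : ℝ) * ‖lam‖ ≤ ‖Φ‖ * ‖g‖ := h5
      _ ≤ ‖Φ‖ * 1 := mul_le_mul_of_nonneg_left hgnorm (norm_nonneg Φ)
      _ = ‖Φ‖ := mul_one _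
  have habs : (1 : ℝ) / 2 ≤ ‖lam‖ := by
    have h4 := norm_add_le lam (1 - lam)
    rw [show lam + (1 - lam) = 1 by ring, norm_one, norm_sub_rev 1 lam] at h4
    linarith
  have hmul : (n : ℝ) * (1 / 2) ≤ (n : ℝ) * ‖lam‖ :=
    mul_le_mul_of_nonneg_left habs (Nat.cast_nonneg n)
  linarith

end Fwd
section Rev

open ContinuousLinearMap NormedSpace

variable {I : Type} [Nonempty I] [DecidableEq I]
  {M : Type} [NonUnitalNormedRing M] [NormedSpace ℂ M] [IsScalarTower ℂ M M]
  [SMulCommClass ℂ M M] [CompleteSpace M]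
  {e : I → I → M}

set_option maxHeartbeats 2000000 in
lemma finite_spa (hM : IsMatrixUnitsL1 I M e) (hfin : Finite I) : StrongPseudoAmenable M := by
  classical
  haveI : Fintype I := Fintype.ofFinite I
  set n : ℕ := Fintype.card I with hn
  have hn0 : 0 < n := Fintype.card_pos
  have hnC : (n : ℂ) ≠ 0 := Nat.cast_ne_zero.mpr hn0.ne'
  set u : M := ∑ k : I, e k k with hu
  set m₀ : TensorBidual M := (n : ℂ)⁻¹ • ∑ p : I × I, elemT (e p.1 p.2) (e p.2 p.1) with hm₀
  have hul : ∀ a : M, u * a = a := by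
    have h1 : ContinuousLinearMap.mul ℂ M u = ContinuousLinearMap.id ℂ M := by
      apply ext_units hM
      intro i j
      show u * e i j = e i j
      rw [hu, Finset.sum_mul, Finset.sum_congr rfl (fun k _ => hM.1 k k i j)]
      simp
    intro a
    exact ContinuousLinearMap.ext_iff.mp h1 a
  have hur : ∀ a : M, a * u = a := by
    have h1 : (ContinuousLinearMap.mul ℂ M).flip u = ContinuousLinearMap.id ℂ M := by
      apply ext_units hM
      intro i j
      show e i j * u = e i j
      rw [hu, Finset.mul_sum, Finset.sum_congr rfl (fun k _ => hM.1 i j k k)]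
      simp
    intro a
    exact ContinuousLinearMap.ext_iff.mp h1 a
  have hpi : piSS m₀ = inclB u := by
    ext f
    show m₀ (piStar M f) = f u
    rw [hm₀, ContinuousLinearMap.smul_apply, ContinuousLinearMap.sum_apply]
    have h2 : ∀ p : I × I, elemT (e p.1 p.2) (e p.2 p.1) (piStar M f) = f (e p.1 p.1) := by
      intro p
      show f (e p.1 p.2 * e p.2 p.1) = f (e p.1 p.1)
      rw [hM.1]
      simp
    rw [Finset.sum_congr rfl (fun p _ => h2 p), Fintype.sum_prod_type]
    have h3 : ∑ i : I, ∑ _j : I, f (e i i) = (n : ℂ) * ∑ i : I, f (e i i) := by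
      simp [Finset.sum_const, Finset.card_univ, nsmul_eq_mul, Finset.mul_sum, hn]
    rw [h3, smul_eq_mul, ← mul_assoc, inv_mul_cancel₀ hnC, one_mul, hu, map_sum]
  have hts : ∀ a : M, tsmulL a m₀ = tsmulR a m₀ := by
    set TL : M →L[ℂ] TensorBidual M :=
      ((compL ℂ (BilForms M) (BilForms M) ℂ) m₀).comp
        (((compL ℂ M M (StrongDual ℂ M)).flip).comp (ContinuousLinearMap.mul ℂ M))
      with hTL
    set TR : M →L[ℂ] TensorBidual M :=
      ((compL ℂ (BilForms M) (BilForms M) ℂ) m₀).comp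
        ((compL ℂ M (StrongDual ℂ M) (StrongDual ℂ M)).comp
          (((compL ℂ M M ℂ).flip).comp ((ContinuousLinearMap.mul ℂ M).flip))) with hTR
    have hTLa : ∀ a : M, TL a = tsmulL a m₀ := fun a => rfl
    have hTRa : ∀ a : M, TR a = tsmulR a m₀ := fun a => rfl
    have h1 : ∀ F : BilForms M, (ContinuousLinearMap.apply ℂ ℂ F).comp TL
        = (ContinuousLinearMap.apply ℂ ℂ F).comp TR := by
      intro F
      refine ext_units (X := ℂ) hM fun i j => ?_
      show m₀ (leftBil M (e i j) F) = m₀ (rightBil M (e i j) F)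
      rw [hm₀, ContinuousLinearMap.smul_apply, ContinuousLinearMap.smul_apply,
        ContinuousLinearMap.sum_apply, ContinuousLinearMap.sum_apply]
      have hL : ∀ p : I × I, elemT (e p.1 p.2) (e p.2 p.1) (leftBil M (e i j) F)
          = if j = p.1 then F (e i p.2) (e p.2 p.1) else 0 := by
        intro p
        show F (e i j * e p.1 p.2) (e p.2 p.1) = _
        rw [hM.1]
        split
        · rfl
        · simp
      have hR : ∀ p : I × I, elemT (e p.1 p.2) (e p.2 p.1) (rightBil M (e i j) F)
          = if p.1 = i then F (e p.1 p.2) (e p.2 j) else 0 := by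
        intro p
        show F (e p.1 p.2) (e p.2 p.1 * e i j) = _
        rw [hM.1]
        split
        · rfl
        · simp
      have e1 : ∑ p : I × I, (if j = p.1 then F (e i p.2) (e p.2 p.1) else 0)
          = ∑ l : I, F (e i l) (e l j) := by
        rw [Fintype.sum_prod_type, Finset.sum_comm]
        simp
      have e2 : ∑ p : I × I, (if p.1 = i then F (e p.1 p.2) (e p.2 j) else 0)
          = ∑ l : I, F (e i l) (e l j) := by
        rw [Fintype.sum_prod_type, Finset.sum_comm]
        simp
      rw [Finset.sum_congr rfl (fun p _ => hL p), Finset.sum_congr rfl (fun p _ => hR p),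
        e1, e2]
    intro a
    ext F
    exact ContinuousLinearMap.ext_iff.mp (h1 F) a
  refine ⟨⟨Unit, fun _ _ => True, fun _ => trivial, fun _ _ => trivial, ⟨()⟩,
    fun _ _ => ⟨(), trivial, trivial⟩⟩, fun _ => m₀, ?_, ?_, ?_⟩
  · intro a ε hε
    exact ⟨(), fun j _ => by
      simp only [hts a, sub_self]
      simpa [dist_self] using hε⟩
  · intro a _
    rw [hpi]
    ext f
    show f (a * u) = f (u * a)
    rw [hul a, hur a]
  · intro a ε hε
    have : bsmulR a (piSS m₀) = inclB a := by
      rw [hpi]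
      ext f
      show f (u * a) = f a
      rw [hul a]
    exact ⟨(), fun j _ => by simpa [this, dist_self] using hε⟩

end Rev
/-- Let `I` be a non-empty set.  Then the matrix algebra `M_I(ℂ)` is
strong pseudo-amenable if and only if `I` is finite. -/
theorem strongPseudoAmenable_matrixAlgebra_iff
    (I : Type) [Nonempty I] [DecidableEq I]
    (M : Type) [NonUnitalNormedRing M] [NormedSpace ℂ M] [IsScalarTower ℂ M M]
    [SMulCommClass ℂ M M] [CompleteSpace M]
    (e : I → I → M) (hM : IsMatrixUnitsL1 I M e) :
    StrongPseudoAmenable M ↔ Finite I := by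
  exact ⟨spa_finite hM, finite_spa hM⟩
end
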